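/- Let μ ≥ 1, θ₀ = πμ/(2(2μ+1)), θ₁ = π(μ+1)/(2(2μ+1)), and φ ∈ (0, π/2). Define for natural numbers j₀, j₁ the quantity P(j₀,j₁) = cos²φ·cos^{2j₀}(θ₀)·sin^{2j₁}(θ₀) / (sin²φ·cos^{2j₀}(θ₁)·sin^{2j₁}(θ₁) + cos²φ·cos^{2j₀}(θ₀)·sin^{2j₁}(θ₀)). If j₀ = j₁ then P(j₀,j₁) = cos²φ. -/

import Mathlib

theorem reversal (μ : ℕ) (hμ : 1 ≤ μ)
    (θ₀ θ₁ : ℝ)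
    (h0 : θ₀ = Real.pi * μ / (2 * (2 * μ + 1)))
    (h1 : θ₁ = Real.pi * (μ + 1) / (2 * (2 * μ + 1)))
    (φ : ℝ) (hφ : φ ∈ Set.Ioo 0 (Real.pi / 2))
    (j₀ j₁ : ℕ) (hj : j₀ = j₁) :
    Real.cos φ ^ 2 * Real.cos θ₀ ^ (2 * j₀) * Real.sin θ₀ ^ (2 * j₁) /
      (Real.sin φ ^ 2 * Real.cos θ₁ ^ (2 * j₀) * Real.sin θ₁ ^ (2 * j₁) +
       Real.cos φ ^ 2 * Real.cos θ₀ ^ (2 * j₀) * Real.sin θ₀ ^ (2 * j₁))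
      = Real.cos φ ^ 2 := by
  subst hj
  have hπ := Real.pi_pos
  have hμ' : (1 : ℝ) ≤ (μ : ℝ) := by exact_mod_cast hμ
  have hden : (0 : ℝ) < 2 * (2 * μ + 1) := by positivity
  have hθ0pos : 0 < θ₀ := by rw [h0]; positivity
  have hθ0lt : θ₀ < Real.pi / 2 := by
    rw [h0, div_lt_div_iff₀ hden two_pos]
    nlinarith
  have hθ1 : θ₁ = Real.pi / 2 - θ₀ := by
    rw [h0, h1]; field_simp; ring
  have hc1 : Real.cos θ₁ = Real.sin θ₀ := by
    rw [hθ1, Real.cos_pi_div_two_sub]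
  have hs1 : Real.sin θ₁ = Real.cos θ₀ := by
    rw [hθ1, Real.sin_pi_div_two_sub]
  have hc : 0 < Real.cos θ₀ := Real.cos_pos_of_mem_Ioo ⟨by linarith, hθ0lt⟩
  have hs : 0 < Real.sin θ₀ := Real.sin_pos_of_pos_of_lt_pi hθ0pos (by linarith)
  rw [hc1, hs1]
  have hcp : (0:ℝ) < Real.cos θ₀ ^ (2 * j₀) := pow_pos hc _
  have hsp : (0:ℝ) < Real.sin θ₀ ^ (2 * j₀) := pow_pos hs _
  have hpyth := Real.sin_sq_add_cos_sq φ
  have key : Real.sin φ ^ 2 * Real.sin θ₀ ^ (2 * j₀) * Real.cos θ₀ ^ (2 * j₀) +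
      Real.cos φ ^ 2 * Real.cos θ₀ ^ (2 * j₀) * Real.sin θ₀ ^ (2 * j₀) =
      Real.cos θ₀ ^ (2 * j₀) * Real.sin θ₀ ^ (2 * j₀) := by
    linear_combination (Real.sin θ₀ ^ (2 * j₀) * Real.cos θ₀ ^ (2 * j₀)) * hpyth
  rw [key]
  field_simp
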